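/- Let G be a group, Γ a group acting on G by group automorphisms (writing g^γ for the action), and let G ⋊ Γ be the corresponding semidirect product with canonical injection i : G → G ⋊ Γ and canonical splitting s : Γ → G ⋊ Γ. Let N be the normal closure in G ⋊ Γ of the image s(Γ), and let q : G ⋊ Γ → (G ⋊ Γ)/N be the quotient map. Then the composite homomorphism q ∘ i : G → (G ⋊ Γ)/N is surjective, and its kernel equals the subgroup of G generated by {g⁻¹ · g^γ : g ∈ G, γ ∈ Γ}. Consequently the Zariski–van Kampen quotient G ⫽ Γ is isomorphic to (G ⋊ Γ)/N. -/

import Mathlib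

open SemidirectProduct

/-- The subgroup `N_Γ` of `G` generated by `{g⁻¹ * g^γ : g ∈ G, γ ∈ Γ}`, for a group `Γ` acting
on a group `G` by group automorphisms (encoded as `φ : Γ →* MulAut G`).  The Zariski–van Kampen
quotient `G ⫽ Γ` is `G ⧸ zvkSubgroup φ`. -/
def zvkSubgroup {G Γ : Type*} [Group G] [Group Γ] (φ : Γ →* MulAut G) : Subgroup G :=
  Subgroup.closure {x : G | ∃ (g : G) (γ : Γ), x = g⁻¹ * φ γ g}

/-- The subgroup `N_Γ` is a normal subgroup of `G` (so that the Zariski–van Kampen quotient is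
a group). -/
instance zvkSubgroup_normal {G Γ : Type*} [Group G] [Group Γ] (φ : Γ →* MulAut G) :
    (zvkSubgroup φ).Normal := by
  constructor
  intro n hn
  induction hn using Subgroup.closure_induction with
  | mem x hx =>
      intro g
      obtain ⟨a, γ, rfl⟩ := hx
      have h1 : (a * g⁻¹)⁻¹ * φ γ (a * g⁻¹) ∈ zvkSubgroup φ :=
        Subgroup.subset_closure ⟨a * g⁻¹, γ, rfl⟩
      have h2 : (g⁻¹)⁻¹ * φ γ g⁻¹ ∈ zvkSubgroup φ :=
        Subgroup.subset_closure ⟨g⁻¹, γ, rfl⟩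
      have key : g * (a⁻¹ * φ γ a) * g⁻¹ =
          ((a * g⁻¹)⁻¹ * φ γ (a * g⁻¹)) * ((g⁻¹)⁻¹ * φ γ g⁻¹)⁻¹ := by
        simp only [map_mul]
        group
      rw [key]
      exact mul_mem h1 (inv_mem h2)
  | one => intro g; simpa using one_mem _
  | mul x y hx hy ihx ihy =>
      intro g
      have key : g * (x * y) * g⁻¹ = (g * x * g⁻¹) * (g * y * g⁻¹) := by group
      rw [key]
      exact mul_mem (ihx g) (ihy g)
  | inv x hx ihx =>
      intro g
      have key : g * x⁻¹ * g⁻¹ = (g * x * g⁻¹)⁻¹ := by group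
      rw [key]
      exact inv_mem (ihx g)

/-- Let `G` be a group, `Γ` a group acting on `G` by group automorphisms
(encoded as `φ : Γ →* MulAut G`), and `G ⋊[φ] Γ` the semidirect product, with canonical
injection `inl : G →* G ⋊[φ] Γ` and canonical splitting `inr : Γ →* G ⋊[φ] Γ`.  Let `N` be the
normal closure in `G ⋊[φ] Γ` of the image `inr Γ`, and let `q` be the quotient map
`G ⋊[φ] Γ →* (G ⋊[φ] Γ) ⧸ N`.  Then the composite `q ∘ inl : G → (G ⋊[φ] Γ) ⧸ N` is
surjective, and its kernel equals the subgroup of `G` generated by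
`{g⁻¹ * g^γ : g ∈ G, γ ∈ Γ}`.  Consequently the Zariski–van Kampen quotient `G ⫽ Γ` is
isomorphic to `(G ⋊[φ] Γ) ⧸ N`. -/
theorem zvk_quotient_eq_semidirectProduct_quotient {G Γ : Type*} [Group G] [Group Γ]
    (φ : Γ →* MulAut G) :
    Function.Surjective
      ((QuotientGroup.mk' (Subgroup.normalClosure
          (Set.range fun γ : Γ => (inr γ : G ⋊[φ] Γ)))).comp inl) ∧
    ((QuotientGroup.mk' (Subgroup.normalClosure
          (Set.range fun γ : Γ => (inr γ : G ⋊[φ] Γ)))).comp inl).ker = zvkSubgroup φ ∧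
    Nonempty ((G ⧸ zvkSubgroup φ) ≃*
      ((G ⋊[φ] Γ) ⧸ Subgroup.normalClosure
          (Set.range fun γ : Γ => (inr γ : G ⋊[φ] Γ)))) := by
  set N := Subgroup.normalClosure (Set.range fun γ : Γ => (inr γ : G ⋊[φ] Γ)) with hN
  have hKinv : ∀ (γ : Γ) (g : G), g ∈ zvkSubgroup φ → φ γ g ∈ zvkSubgroup φ := by
    intro γ g hg
    induction hg using Subgroup.closure_induction with
    | mem x hx =>
        obtain ⟨h, δ, rfl⟩ := hx
        refine Subgroup.subset_closure ⟨φ γ h, γ * δ * γ⁻¹, ?_⟩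
        have comp : ∀ (a b : Γ) (x : G), φ a (φ b x) = φ (a * b) x := fun a b x => by
          rw [map_mul]; rfl
        rw [map_mul, map_inv, comp, comp, show γ * δ * γ⁻¹ * γ = γ * δ by group]
    | one => rw [map_one]; exact one_mem _
    | mul x y hx hy ihx ihy => rw [map_mul]; exact mul_mem ihx ihy
    | inv x hx ihx => rw [map_inv]; exact inv_mem ihx
  -- the subgroup M = {x | x.left ∈ zvkSubgroup φ}
  let M : Subgroup (G ⋊[φ] Γ) :=
    { carrier := {x | x.left ∈ zvkSubgroup φ}
      one_mem' := by
        simp only [Set.mem_setOf_eq, one_left]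
        exact one_mem _
      mul_mem' := by
        intro a b ha hb
        simp only [Set.mem_setOf_eq, mul_left] at *
        exact mul_mem ha (hKinv _ _ hb)
      inv_mem' := by
        intro a ha
        simp only [Set.mem_setOf_eq, inv_left] at *
        exact hKinv _ _ (inv_mem ha) }
  have hMnormal : M.Normal := by
    constructor
    intro n hn x
    have hb : n.left ∈ zvkSubgroup φ := hn
    show (x * n * x⁻¹).left ∈ zvkSubgroup φ
    have key : (x * n * x⁻¹).left =
        (x.left * φ x.right n.left * x.left⁻¹) *
          ((x.left⁻¹)⁻¹ * φ (x.right * n.right * x.right⁻¹) x.left⁻¹) := by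
      have comp : ∀ (a b : Γ) (x : G), φ a (φ b x) = φ (a * b) x := fun a b x => by
        rw [map_mul]; rfl
      simp only [mul_left, inv_left, mul_right, comp]
      group
    rw [key]
    exact mul_mem ((zvkSubgroup_normal φ).conj_mem _ (hKinv _ _ hb) _)
      (Subgroup.subset_closure ⟨x.left⁻¹, _, rfl⟩)
  have hNM : N ≤ M := by
    haveI := hMnormal
    apply Subgroup.normalClosure_le_normal
    rintro _ ⟨γ, rfl⟩
    show ((inr γ : G ⋊[φ] Γ)).left ∈ zvkSubgroup φ
    simp only [right_inr, left_inr]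
    exact one_mem _
  have hinrN : ∀ γ : Γ, (inr γ : G ⋊[φ] Γ) ∈ N :=
    fun γ => Subgroup.subset_normalClosure ⟨γ, rfl⟩
  have hinlN : ∀ g ∈ zvkSubgroup φ, (inl g : G ⋊[φ] Γ) ∈ N := by
    intro g hg
    induction hg using Subgroup.closure_induction with
    | mem x hx =>
        obtain ⟨h, γ, rfl⟩ := hx
        have key : (inl (h⁻¹ * φ γ h) : G ⋊[φ] Γ) =
            ((inl h)⁻¹ * inr γ * ((inl h)⁻¹)⁻¹) * inr γ⁻¹ := by
          rw [map_mul, map_inv inl, inl_aut]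
          group
        rw [key]
        exact mul_mem (Subgroup.Normal.conj_mem inferInstance _ (hinrN γ) _) (hinrN γ⁻¹)
    | one => simpa using one_mem _
    | mul x y hx hy ihx ihy => rw [map_mul]; exact mul_mem ihx ihy
    | inv x hx ihx => rw [map_inv]; exact inv_mem ihx
  have hker : ((QuotientGroup.mk' N).comp inl).ker = zvkSubgroup φ := by
    ext g
    simp only [MonoidHom.mem_ker, MonoidHom.comp_apply, QuotientGroup.mk'_apply,
      QuotientGroup.eq_one_iff]
    constructor
    · intro h
      have : (inl g : G ⋊[φ] Γ).left ∈ zvkSubgroup φ := hNM h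
      simpa using this
    · exact hinlN g
  have hsurj : Function.Surjective ((QuotientGroup.mk' N).comp inl) := by
    intro x
    induction x using QuotientGroup.induction_on with
    | H x =>
      refine ⟨x.left, ?_⟩
      have : ((QuotientGroup.mk' N) (inr x.right : G ⋊[φ] Γ)) = 1 := by
        rw [QuotientGroup.mk'_apply, QuotientGroup.eq_one_iff]
        exact hinrN x.right
      calc ((QuotientGroup.mk' N).comp inl) x.left
          = (QuotientGroup.mk' N) (inl x.left) * (QuotientGroup.mk' N) (inr x.right) := by
            rw [this, mul_one]; rfl
        _ = (QuotientGroup.mk' N) x := by rw [← map_mul, inl_left_mul_inr_right]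
        _ = QuotientGroup.mk x := rfl
  exact ⟨hsurj, hker,
    ⟨(QuotientGroup.quotientMulEquivOfEq hker.symm).trans
      (QuotientGroup.quotientKerEquivOfSurjective _ hsurj)⟩⟩
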